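/- Assume (D1) and that (1/n)Σ_{i=1}^n ‖Dh(X_i)‖₂² κ₁(X_i) ≤ 1 + E[‖Dh(X)‖₂²κ₁(X)]. Then for every ζ ∈ ℝ^d: |L_n(ζ)| ≤ (‖Σ‖₂² ‖ζ‖₂³ / 8)(1 + E[‖Dh(X)‖₂²κ₁(X)]) and ‖∇L_n(ζ)‖₂ ≤ (3‖Σ‖₂² ‖ζ‖₂² / 8)(1 + E[‖Dh(X)‖₂²κ₁(X)]). -/

import Mathlib

open MeasureTheory Matrix Filter ProbabilityTheory
open scoped BigOperators ENNReal NNReal Topology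

noncomputable section

/-- The Euclidean norm `‖v‖₂` of a vector `v ∈ ℝ^k`. -/
def enorm2 {k : ℕ} (v : Fin k → ℝ) : ℝ := Real.sqrt (∑ i, v i ^ 2)

/-- The operator norm `‖A‖₂` of a matrix with respect to Euclidean norms. -/
def opNorm2 {a b : ℕ} (A : Matrix (Fin a) (Fin b) ℝ) : ℝ :=
  sSup {r : ℝ | ∃ v : Fin b → ℝ, enorm2 v = 1 ∧ r = enorm2 (A.mulVec v)}

/-- The smallest eigenvalue `σ_min(A)` of a symmetric matrix, realized as the minimum of the
quadratic form over the unit sphere. -/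
def sigmaMin {k : ℕ} (A : Matrix (Fin k) (Fin k) ℝ) : ℝ :=
  sInf {r : ℝ | ∃ v : Fin k → ℝ, enorm2 v = 1 ∧ r = v ⬝ᵥ A.mulVec v}

/-- The squared Mahalanobis norm `‖v‖_Σ² = vᵀ Σ⁻¹ v`. -/
def mahal {m : ℕ} (S : Matrix (Fin m) (Fin m) ℝ) (v : Fin m → ℝ) : ℝ :=
  v ⬝ᵥ (S⁻¹).mulVec v

/-- The Jacobian matrix `Dh(x) ∈ ℝ^{d×m}` of `h : ℝ^m → ℝ^d` at `x`. -/
def jac {m d : ℕ} (h : (Fin m → ℝ) → (Fin d → ℝ)) (x : Fin m → ℝ) : Matrix (Fin d) (Fin m) ℝ :=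
  Matrix.of fun β γ => fderiv ℝ h x (Pi.single γ 1) β

/-- The Hessian matrix `D²h^β(x) ∈ ℝ^{m×m}` of the `β`-th component of `h` at `x`. -/
def hess {m d : ℕ} (h : (Fin m → ℝ) → (Fin d → ℝ)) (β : Fin d) (x : Fin m → ℝ) :
    Matrix (Fin m) (Fin m) ℝ :=
  Matrix.of fun i j =>
    fderiv ℝ (fun y => fderiv ℝ (fun z => h z β) y (Pi.single j 1)) x (Pi.single i 1)

/-- Assumption (CH): `0` lies in the interior of the convex hull of the range of `h`. -/
def AssumptionCH {m d : ℕ} (h : (Fin m → ℝ) → Fin d → ℝ) : Prop :=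
  (0 : Fin d → ℝ) ∈ interior (convexHull ℝ (Set.range h))

/-- Assumption (D1): `h ∈ C³` and the Jacobian is Lipschitz with modulus `κ₁`. -/
def AssumptionD1 {m d : ℕ} (h : (Fin m → ℝ) → Fin d → ℝ) (κ₁ : (Fin m → ℝ) → ℝ) : Prop :=
  ContDiff ℝ 3 h ∧ (∀ x, 0 ≤ κ₁ x) ∧
    ∀ (x Δ : Fin m → ℝ) (ζ : Fin d → ℝ),
      enorm2 (fun γ => ∑ β, ζ β * (jac h (x + Δ) β γ - jac h x β γ)) ≤
        κ₁ x * enorm2 Δ * enorm2 ζ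

/-- Assumption (D2): the Hessians are locally Lipschitz with modulus `κ₂` at scale `δ̂`. -/
def AssumptionD2 {m d : ℕ} (h : (Fin m → ℝ) → Fin d → ℝ) (κ₂ : (Fin m → ℝ) → ℝ)
    (δhat : ℝ) : Prop :=
  0 < δhat ∧ (∀ x, 0 ≤ κ₂ x) ∧
    ∀ (x Δ : Fin m → ℝ) (ζ : Fin d → ℝ), enorm2 Δ ≤ δhat →
      opNorm2 (∑ β, ζ β • (hess h β (x + Δ) - hess h β x)) ≤ κ₂ x * enorm2 Δ * enorm2 ζ

/-- Optimal transport cost with ground cost `c(x̄,x) = ‖x̄ - x‖_Σ²`. -/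
def otCost {m : ℕ} (S : Matrix (Fin m) (Fin m) ℝ) (Q P : Measure (Fin m → ℝ)) : ℝ≥0∞ :=
  ⨅ (π : Measure ((Fin m → ℝ) × (Fin m → ℝ))) (_ : IsProbabilityMeasure π)
    (_ : π.map Prod.fst = Q) (_ : π.map Prod.snd = P),
    ∫⁻ p, ENNReal.ofReal (mahal S (p.1 - p.2)) ∂π

/-- The empirical measure of the sample `X₁, …, X_n`. -/
def empMeas {m n : ℕ} (X : Fin n → Fin m → ℝ) : Measure (Fin m → ℝ) :=
  (n : ℝ≥0∞)⁻¹ • ∑ i, Measure.dirac (X i)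

/-- The Wasserstein projection value `R_n(h)`. -/
def Rn {m d n : ℕ} (S : Matrix (Fin m) (Fin m) ℝ) (h : (Fin m → ℝ) → Fin d → ℝ)
    (X : Fin n → Fin m → ℝ) : ℝ≥0∞ :=
  ⨅ (P : Measure (Fin m → ℝ)) (_ : IsProbabilityMeasure P) (_ : Integrable h P)
    (_ : (∫ x, h x ∂P) = 0), otCost S (empMeas X) P

/-- The inner objective `ζᵀ ∫₀¹ Dh(Xᵢ + n^{-1/2}Δu)Δ du − ‖Δ‖_Σ²`. -/
def innerObj {m d : ℕ} (S : Matrix (Fin m) (Fin m) ℝ) (h : (Fin m → ℝ) → Fin d → ℝ)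
    (n : ℕ) (Xi : Fin m → ℝ) (ζ : Fin d → ℝ) (Δ : Fin m → ℝ) : ℝ :=
  (∫ u in (0:ℝ)..1, ζ ⬝ᵥ (jac h (Xi + ((Real.sqrt n)⁻¹ * u) • Δ)).mulVec Δ) - mahal S Δ

/-- The dual function `M_n(ζ)`, with values in `[0,∞]`. -/
def Mn {m d n : ℕ} (S : Matrix (Fin m) (Fin m) ℝ) (h : (Fin m → ℝ) → Fin d → ℝ)
    (X : Fin n → Fin m → ℝ) (ζ : Fin d → ℝ) : ℝ≥0∞ :=
  (n : ℝ≥0∞)⁻¹ * ∑ i, ⨆ Δ : Fin m → ℝ, ENNReal.ofReal (innerObj S h n (X i) ζ Δ)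

/-- `H_n = n^{-1/2} ∑ᵢ h(Xᵢ)`. -/
def Hn {m d n : ℕ} (h : (Fin m → ℝ) → Fin d → ℝ) (X : Fin n → Fin m → ℝ) : Fin d → ℝ :=
  (Real.sqrt n)⁻¹ • ∑ i, h (X i)

/-- `𝒱_n = n⁻¹ ∑ᵢ Dh(Xᵢ) Σ Dh(Xᵢ)ᵀ`. -/
def Vn {m d n : ℕ} (S : Matrix (Fin m) (Fin m) ℝ) (h : (Fin m → ℝ) → Fin d → ℝ)
    (X : Fin n → Fin m → ℝ) : Matrix (Fin d) (Fin d) ℝ :=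
  (n : ℝ)⁻¹ • ∑ i, jac h (X i) * S * (jac h (X i))ᵀ

/-- `𝒲_n = n⁻¹ ∑ᵢ h(Xᵢ) h(Xᵢ)ᵀ`. -/
def Wn {m d n : ℕ} (h : (Fin m → ℝ) → Fin d → ℝ) (X : Fin n → Fin m → ℝ) :
    Matrix (Fin d) (Fin d) ℝ :=
  (n : ℝ)⁻¹ • ∑ i, Matrix.vecMulVec (h (X i)) (h (X i))

/-- Entry of the tensor `Dh^β(x) Σ D²h^γ(x) Σ Dh^ω(x)ᵀ`. -/
def KnE {m d : ℕ} (S : Matrix (Fin m) (Fin m) ℝ) (h : (Fin m → ℝ) → Fin d → ℝ)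
    (x : Fin m → ℝ) (β γ ω : Fin d) : ℝ :=
  jac h x β ⬝ᵥ S.mulVec ((hess h γ x).mulVec (S.mulVec (jac h x ω)))

/-- The tensor `𝒦_n`. -/
def Kn {m d n : ℕ} (S : Matrix (Fin m) (Fin m) ℝ) (h : (Fin m → ℝ) → Fin d → ℝ)
    (X : Fin n → Fin m → ℝ) (β γ ω : Fin d) : ℝ :=
  (n : ℝ)⁻¹ * ∑ i, KnE S h (X i) β γ ω

/-- `ξ_n = 𝒱_n⁻¹ H_n`. -/
def xin {m d n : ℕ} (S : Matrix (Fin m) (Fin m) ℝ) (h : (Fin m → ℝ) → Fin d → ℝ)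
    (X : Fin n → Fin m → ℝ) : Fin d → ℝ :=
  ((Vn S h X)⁻¹).mulVec (Hn h X)

/-- The quadratic term `⟨𝒱_n, ξ_n^{⊗2}⟩`. -/
def quadTerm {m d n : ℕ} (S : Matrix (Fin m) (Fin m) ℝ) (h : (Fin m → ℝ) → Fin d → ℝ)
    (X : Fin n → Fin m → ℝ) : ℝ :=
  xin S h X ⬝ᵥ (Vn S h X).mulVec (xin S h X)

/-- The cubic term `⟨𝒦_n, ξ_n^{⊗3}⟩`. -/
def cubTerm {m d n : ℕ} (S : Matrix (Fin m) (Fin m) ℝ) (h : (Fin m → ℝ) → Fin d → ℝ)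
    (X : Fin n → Fin m → ℝ) : ℝ :=
  ∑ β, ∑ γ, ∑ ω, Kn S h X β γ ω * xin S h X β * xin S h X γ * xin S h X ω

/-- The cubic form `L_n(ζ)`. -/
def Ln {m d n : ℕ} (S : Matrix (Fin m) (Fin m) ℝ) (h : (Fin m → ℝ) → Fin d → ℝ)
    (X : Fin n → Fin m → ℝ) (ζ : Fin d → ℝ) : ℝ :=
  (1/8) * ∑ β, ∑ γ, ∑ ω, ζ β * ζ γ * ζ ω * Kn S h X β γ ω

/-- `F_n(ζ) = ¼ ζᵀ𝒱_nζ + n^{-1/2} L_n(ζ)`. -/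
def Fn {m d n : ℕ} (S : Matrix (Fin m) (Fin m) ℝ) (h : (Fin m → ℝ) → Fin d → ℝ)
    (X : Fin n → Fin m → ℝ) (ζ : Fin d → ℝ) : ℝ :=
  (1/4) * (ζ ⬝ᵥ (Vn S h X).mulVec ζ) + (Real.sqrt n)⁻¹ * Ln S h X ζ

/-- The gradient `∇L_n(ζ)`. -/
def gradLn {m d n : ℕ} (S : Matrix (Fin m) (Fin m) ℝ) (h : (Fin m → ℝ) → Fin d → ℝ)
    (X : Fin n → Fin m → ℝ) (ζ : Fin d → ℝ) : Fin d → ℝ :=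
  fun β => fderiv ℝ (Ln S h X) ζ (Pi.single β 1)

/-- The population matrix `V = E[Dh(X) Σ Dh(X)ᵀ]`. -/
def VP {m d : ℕ} (S : Matrix (Fin m) (Fin m) ℝ) (h : (Fin m → ℝ) → Fin d → ℝ)
    (P : Measure (Fin m → ℝ)) : Matrix (Fin d) (Fin d) ℝ :=
  Matrix.of fun β γ => ∫ x, (jac h x * S * (jac h x)ᵀ) β γ ∂P

/-- The population matrix `W = E[h(X) h(X)ᵀ]`. -/
def WP {m d : ℕ} (h : (Fin m → ℝ) → Fin d → ℝ) (P : Measure (Fin m → ℝ)) :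
    Matrix (Fin d) (Fin d) ℝ :=
  Matrix.of fun β γ => ∫ x, h x β * h x γ ∂P

/-- `E[‖Dh(X)‖₂² κ₁(X)]`. -/
def momA {m d : ℕ} (h : (Fin m → ℝ) → Fin d → ℝ) (κ₁ : (Fin m → ℝ) → ℝ)
    (P : Measure (Fin m → ℝ)) : ℝ := ∫ x, opNorm2 (jac h x) ^ 2 * κ₁ x ∂P

/-- `E[‖Dh(X)‖₂² κ₁(X)²]`. -/
def momB {m d : ℕ} (h : (Fin m → ℝ) → Fin d → ℝ) (κ₁ : (Fin m → ℝ) → ℝ)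
    (P : Measure (Fin m → ℝ)) : ℝ := ∫ x, opNorm2 (jac h x) ^ 2 * κ₁ x ^ 2 ∂P

/-- `E[‖Dh(X)‖₂³ κ₂(X)]`. -/
def momC {m d : ℕ} (h : (Fin m → ℝ) → Fin d → ℝ) (κ₂ : (Fin m → ℝ) → ℝ)
    (P : Measure (Fin m → ℝ)) : ℝ := ∫ x, opNorm2 (jac h x) ^ 3 * κ₂ x ∂P

/-- `E[‖Dh(X)‖₂³ κ₁(X) κ₂(X)]`. -/
def momD {m d : ℕ} (h : (Fin m → ℝ) → Fin d → ℝ) (κ₁ κ₂ : (Fin m → ℝ) → ℝ)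
    (P : Measure (Fin m → ℝ)) : ℝ := ∫ x, opNorm2 (jac h x) ^ 3 * κ₁ x * κ₂ x ∂P

/-- `E[‖Dh(X)‖₂² κ₁(X)³]`. -/
def momE {m d : ℕ} (h : (Fin m → ℝ) → Fin d → ℝ) (κ₁ : (Fin m → ℝ) → ℝ)
    (P : Measure (Fin m → ℝ)) : ℝ := ∫ x, opNorm2 (jac h x) ^ 2 * κ₁ x ^ 3 ∂P

/-- `E[‖Dh(X)‖₂³ κ₁(X)² κ₂(X)]`. -/
def momF {m d : ℕ} (h : (Fin m → ℝ) → Fin d → ℝ) (κ₁ κ₂ : (Fin m → ℝ) → ℝ)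
    (P : Measure (Fin m → ℝ)) : ℝ := ∫ x, opNorm2 (jac h x) ^ 3 * κ₁ x ^ 2 * κ₂ x ∂P

/-- Condition A on the sample. -/
def CondA {m d n : ℕ} (S : Matrix (Fin m) (Fin m) ℝ) (h : (Fin m → ℝ) → Fin d → ℝ)
    (κ₁ κ₂ : (Fin m → ℝ) → ℝ) (P : Measure (Fin m → ℝ)) (X : Fin n → Fin m → ℝ) : Prop :=
  (2⁻¹ * sigmaMin (VP S h P) ≤ sigmaMin (Vn S h X)) ∧
  (enorm2 (Hn h X) ≤ 2 * Real.sqrt (Real.log n)) ∧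
  (∀ i, opNorm2 (jac h (X i)) ≤ (n : ℝ) ^ ((1 : ℝ)/4)) ∧
  (∀ i, κ₁ (X i) ≤ (n : ℝ) ^ ((1 : ℝ)/4)) ∧
  (|(n : ℝ)⁻¹ * ∑ i, opNorm2 (jac h (X i)) ^ 2 * κ₁ (X i)| ≤ 1 + momA h κ₁ P) ∧
  (|(n : ℝ)⁻¹ * ∑ i, opNorm2 (jac h (X i)) ^ 2 * κ₁ (X i) ^ 2| ≤ 1 + momB h κ₁ P) ∧
  (|(n : ℝ)⁻¹ * ∑ i, opNorm2 (jac h (X i)) ^ 3 * κ₂ (X i)| ≤ 1 + momC h κ₂ P) ∧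
  (|(n : ℝ)⁻¹ * ∑ i, opNorm2 (jac h (X i)) ^ 3 * κ₁ (X i) * κ₂ (X i)|
      ≤ Real.sqrt n + momD h κ₁ κ₂ P) ∧
  (|(n : ℝ)⁻¹ * ∑ i, opNorm2 (jac h (X i)) ^ 2 * κ₁ (X i) ^ 3| ≤ Real.sqrt n + momE h κ₁ P) ∧
  (|(n : ℝ)⁻¹ * ∑ i, opNorm2 (jac h (X i)) ^ 3 * κ₁ (X i) ^ 2 * κ₂ (X i)|
      ≤ (n : ℝ) + momF h κ₁ κ₂ P)

open Classical in
/-- The principal square root of a positive semidefinite matrix (junk value `0` otherwise). -/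
def matSqrt {k : ℕ} (A : Matrix (Fin k) (Fin k) ℝ) : Matrix (Fin k) (Fin k) ℝ :=
  if hA : A.PosSemidef then
    (hA.1.eigenvectorUnitary : Matrix (Fin k) (Fin k) ℝ) *
      diagonal ((↑) ∘ (Real.sqrt ·) ∘ hA.1.eigenvalues) *
      (star (hA.1.eigenvectorUnitary : Matrix (Fin k) (Fin k) ℝ))
  else 0

/-- The standard Gaussian density on `ℝ^d`. -/
def gaussDensity (d : ℕ) (v : Fin d → ℝ) : ℝ :=
  (2 * Real.pi) ^ (-(d : ℝ)/2) * Real.exp (-(∑ i, v i ^ 2)/2)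

/-- `F_{W,V}(z) = ∫_{vᵀW^{1/2}V⁻¹W^{1/2}v ≤ z} φ(v) dv`. -/
def FWV {d : ℕ} (W V : Matrix (Fin d) (Fin d) ℝ) (z : ℝ) : ℝ :=
  ∫ v in {v : Fin d → ℝ | v ⬝ᵥ (matSqrt W * V⁻¹ * matSqrt W).mulVec v ≤ z}, gaussDensity d v

/-- The `(1-α)`-quantile `z_{W,V} = F_{W,V}⁻¹(1-α)`. -/
def zQuantile {d : ℕ} (α : ℝ) (W V : Matrix (Fin d) (Fin d) ℝ) : ℝ :=
  sInf {z : ℝ | 0 < z ∧ 1 - α ≤ FWV W V z}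

/-- The Frobenius inner product of two square matrices. -/
def frob {k : ℕ} (A B : Matrix (Fin k) (Fin k) ℝ) : ℝ := ∑ i, ∑ j, A i j * B i j

/-- The matrix exponential (defined entrywise by the exponential series). -/
def matExp {k : ℕ} (A : Matrix (Fin k) (Fin k) ℝ) : Matrix (Fin k) (Fin k) ℝ :=
  Matrix.of fun i j => ∑' t : ℕ, (t.factorial : ℝ)⁻¹ * (A ^ t) i j

/-- The matrix `L_{W,V}`. -/
def LWV {d : ℕ} (α : ℝ) (W V : Matrix (Fin d) (Fin d) ℝ) : Matrix (Fin d) (Fin d) ℝ :=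
  Matrix.of fun j k =>
    ∫ v in {v : Fin d → ℝ | ∑ i, v i ^ 2 ≤ zQuantile α W V},
      (2 * Real.pi) ^ (-(d : ℝ)/2) *
        Real.exp (-(v ⬝ᵥ (matSqrt V * W⁻¹ * matSqrt V).mulVec v)/2) *
        Real.sqrt (matSqrt V * W⁻¹ * matSqrt V).det *
        (-(1/2) * (v j * v k) + (1/2) * ((matSqrt V)⁻¹ * W * (matSqrt V)⁻¹) j k)

/-- The differential `d(V^{1/2} W⁻¹ V^{1/2})` in the directions `(dW, dV)`. -/
def PhiDiff {d : ℕ} (W V dW dV : Matrix (Fin d) (Fin d) ℝ) : Matrix (Fin d) (Fin d) ℝ :=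
  (Matrix.of fun i j => ∫ s in Set.Ioi (0:ℝ),
      (matExp (-(s • matSqrt V)) * dV * matExp (-(s • matSqrt V))) i j) * W⁻¹ * matSqrt V
  - matSqrt V * W⁻¹ * dW * W⁻¹ * matSqrt V
  + matSqrt V * W⁻¹ *
    (Matrix.of fun i j => ∫ s in Set.Ioi (0:ℝ),
      (matExp (-(s • matSqrt V)) * dV * matExp (-(s • matSqrt V))) i j)

/-- The linear functional `𝓛_{W,V}(dW, dV)`. -/
def calL {d : ℕ} (α : ℝ) (W V dW dV : Matrix (Fin d) (Fin d) ℝ) : ℝ :=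
  frob (LWV α W V) (PhiDiff W V dW dV) / frob (LWV α W V) (matSqrt V * W⁻¹ * matSqrt V)

/-- The total variation distance between two measures. -/
def tvDist {α : Type*} [MeasurableSpace α] (P Q : Measure α) : ℝ :=
  sSup {r : ℝ | ∃ s : Set α, MeasurableSet s ∧ r = |(P s).toReal - (Q s).toReal|}

/-- `sup_{‖t‖₂ ≥ b} |∫ exp(i tᵀ y) dP(y)|`. -/
def charAbsSup {d : ℕ} (P : Measure (Fin d → ℝ)) (b : ℝ) : ℝ :=
  sSup {r : ℝ | ∃ t : Fin d → ℝ, b ≤ enorm2 t ∧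
    r = ‖(∫ y, Complex.exp (Complex.I * ((t ⬝ᵥ y : ℝ) : ℂ)) ∂P)‖}

/-- Cramér's condition for a measure on `ℝ^d`. -/
def CramerCond {d : ℕ} (P : Measure (Fin d → ℝ)) : Prop :=
  ∀ b : ℝ, 0 < b → charAbsSup P b < 1

/-- Entrywise mean `E[A]` of a matrix-valued law. -/
def matMean {k : ℕ} (ν : Measure (Fin k → Fin k → ℝ)) : Matrix (Fin k) (Fin k) ℝ :=
  Matrix.of fun i j => ∫ x, x i j ∂ν

/-- Entrywise mean `E[(A - E[A])²]` of a matrix-valued law. -/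
def matVar {k : ℕ} (ν : Measure (Fin k → Fin k → ℝ)) : Matrix (Fin k) (Fin k) ℝ :=
  Matrix.of fun i j => ∫ x, ((Matrix.of x - matMean ν) * (Matrix.of x - matMean ν)) i j ∂ν

section Toolkit

def toE {k : ℕ} (v : Fin k → ℝ) : EuclideanSpace ℝ (Fin k) := WithLp.toLp 2 v

lemma enorm2_eq {k : ℕ} (v : Fin k → ℝ) : enorm2 v = ‖toE v‖ := by
  simp [enorm2, EuclideanSpace.norm_eq, toE, Real.norm_eq_abs, sq_abs]

lemma enorm2_nonneg {k : ℕ} (v : Fin k → ℝ) : 0 ≤ enorm2 v := Real.sqrt_nonneg _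

lemma enorm2_zero {k : ℕ} : enorm2 (0 : Fin k → ℝ) = 0 := by simp [enorm2]

lemma enorm2_smul {k : ℕ} (c : ℝ) (v : Fin k → ℝ) : enorm2 (c • v) = |c| * enorm2 v := by
  rw [enorm2_eq, enorm2_eq, show toE (c • v) = c • toE v from rfl, norm_smul, Real.norm_eq_abs]

lemma enorm2_sq {k : ℕ} (v : Fin k → ℝ) : enorm2 v ^ 2 = v ⬝ᵥ v := by
  rw [enorm2, Real.sq_sqrt (by positivity)]
  simp [dotProduct, pow_two]

lemma abs_dot_le {k : ℕ} (v w : Fin k → ℝ) : |v ⬝ᵥ w| ≤ enorm2 v * enorm2 w := by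
  rw [enorm2_eq, enorm2_eq]
  have : v ⬝ᵥ w = inner ℝ (toE v) (toE w) := by
    simp [dotProduct, PiLp.inner_apply, toE, RCLike.inner_apply, mul_comm]
  rw [this]
  exact abs_real_inner_le_norm _ _

end Toolkit

lemma enorm2_add_le {k : ℕ} (v w : Fin k → ℝ) : enorm2 (v + w) ≤ enorm2 v + enorm2 w := by
  rw [enorm2_eq, enorm2_eq, enorm2_eq]
  exact norm_add_le (toE v) (toE w)
section OpNorm

lemma enorm2_eq_zero {k : ℕ} {v : Fin k → ℝ} : enorm2 v = 0 ↔ v = 0 := by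
  rw [enorm2_eq, norm_eq_zero]; exact WithLp.toLp_eq_zero 2

lemma opNorm2_bddAbove {a b : ℕ} (A : Matrix (Fin a) (Fin b) ℝ) :
    BddAbove {r : ℝ | ∃ v : Fin b → ℝ, enorm2 v = 1 ∧ r = enorm2 (A.mulVec v)} := by
  refine ⟨Real.sqrt (∑ i, (enorm2 (A i))^2), ?_⟩
  rintro r ⟨v, hv, rfl⟩
  have h1 : ∀ i, (A.mulVec v i)^2 ≤ (enorm2 (A i))^2 := by
    intro i
    have := abs_dot_le (A i) v
    calc (A.mulVec v i)^2 = |A i ⬝ᵥ v|^2 := by rw [sq_abs]; rfl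
      _ ≤ (enorm2 (A i) * enorm2 v)^2 := by
          apply pow_le_pow_left₀ (abs_nonneg _) this
      _ = (enorm2 (A i))^2 := by rw [hv]; ring
  calc enorm2 (A.mulVec v) = Real.sqrt (∑ i, (A.mulVec v i)^2) := rfl
    _ ≤ Real.sqrt (∑ i, (enorm2 (A i))^2) :=
        Real.sqrt_le_sqrt (Finset.sum_le_sum fun i _ => h1 i)

lemma opNorm2_nonneg {a b : ℕ} (A : Matrix (Fin a) (Fin b) ℝ) : 0 ≤ opNorm2 A :=
  Real.sSup_nonneg (by rintro r ⟨v, _, rfl⟩; exact enorm2_nonneg _)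

lemma enorm2_mulVec_le {a b : ℕ} (A : Matrix (Fin a) (Fin b) ℝ) (v : Fin b → ℝ) :
    enorm2 (A.mulVec v) ≤ opNorm2 A * enorm2 v := by
  rcases eq_or_ne (enorm2 v) 0 with hv | hv
  · rw [enorm2_eq_zero.mp hv]
    simp [Matrix.mulVec_zero, enorm2_zero, hv, enorm2_eq_zero.mp hv]
  · have hpos : 0 < enorm2 v := lt_of_le_of_ne (enorm2_nonneg v) (Ne.symm hv)
    set u := (enorm2 v)⁻¹ • v with hu
    have hu1 : enorm2 u = 1 := by
      rw [hu, enorm2_smul, abs_of_pos (by positivity)]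
      field_simp
    have hmem : enorm2 (A.mulVec u) ≤ opNorm2 A :=
      le_csSup (opNorm2_bddAbove A) ⟨u, hu1, rfl⟩
    have hAv : A.mulVec v = enorm2 v • A.mulVec u := by
      rw [hu, Matrix.mulVec_smul, smul_smul, mul_inv_cancel₀ hv, one_smul]
    rw [hAv, enorm2_smul, abs_of_pos hpos, mul_comm (enorm2 v)]
    exact mul_le_mul_of_nonneg_right hmem (le_of_lt hpos) |>.trans_eq rfl

lemma opNorm2_le {a b : ℕ} (A : Matrix (Fin a) (Fin b) ℝ) {C : ℝ} (hC : 0 ≤ C)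
    (hv : ∀ v, enorm2 (A.mulVec v) ≤ C * enorm2 v) : opNorm2 A ≤ C := by
  apply Real.sSup_le _ hC
  rintro r ⟨v, hv1, rfl⟩
  simpa [hv1] using hv v

lemma abs_dot_mulVec_le {a b : ℕ} (A : Matrix (Fin a) (Fin b) ℝ) (v : Fin a → ℝ)
    (w : Fin b → ℝ) : |v ⬝ᵥ A.mulVec w| ≤ enorm2 v * (opNorm2 A * enorm2 w) :=
  (abs_dot_le v _).trans
    (mul_le_mul_of_nonneg_left (enorm2_mulVec_le A w) (enorm2_nonneg v))

lemma opNorm2_transpose_le {a b : ℕ} (A : Matrix (Fin a) (Fin b) ℝ) :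
    opNorm2 Aᵀ ≤ opNorm2 A := by
  apply opNorm2_le _ (opNorm2_nonneg A)
  intro v
  set w := Aᵀ.mulVec v with hw
  have key : enorm2 w ^ 2 = v ⬝ᵥ A.mulVec w := by
    rw [enorm2_sq]
    rw [dotProduct_mulVec v A w]
    congr 1
    rw [hw, Matrix.mulVec_transpose]
  have h2 : enorm2 w ^ 2 ≤ enorm2 v * (opNorm2 A * enorm2 w) := by
    rw [key]
    exact (le_abs_self _).trans (abs_dot_mulVec_le A v w)
  rcases eq_or_lt_of_le (enorm2_nonneg w) with hw0 | hw0
  · rw [← hw0]; exact mul_nonneg (opNorm2_nonneg A) (enorm2_nonneg v)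
  · nlinarith [h2, hw0]

lemma opNorm2_mul_le {a b c : ℕ} (A : Matrix (Fin a) (Fin b) ℝ) (B : Matrix (Fin b) (Fin c) ℝ) :
    opNorm2 (A * B) ≤ opNorm2 A * opNorm2 B := by
  apply opNorm2_le _ (mul_nonneg (opNorm2_nonneg A) (opNorm2_nonneg B))
  intro v
  rw [← Matrix.mulVec_mulVec]
  calc enorm2 (A.mulVec (B.mulVec v)) ≤ opNorm2 A * enorm2 (B.mulVec v) :=
        enorm2_mulVec_le A _
    _ ≤ opNorm2 A * (opNorm2 B * enorm2 v) :=
        mul_le_mul_of_nonneg_left (enorm2_mulVec_le B v) (opNorm2_nonneg A)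
    _ = opNorm2 A * opNorm2 B * enorm2 v := by ring

end OpNorm
section Analysis

lemma enorm2_continuous {k : ℕ} : Continuous fun v : Fin k → ℝ => enorm2 v := by
  have h1 : Continuous (fun v : Fin k → ℝ => (toE v : EuclideanSpace ℝ (Fin k))) :=
    PiLp.continuous_toLp (p := 2) (β := fun _ : Fin k => ℝ)
  simpa [enorm2_eq] using h1.norm

variable {m d : ℕ} {h : (Fin m → ℝ) → Fin d → ℝ} {κ₁ : (Fin m → ℝ) → ℝ}

lemma jac_comp (hD1 : AssumptionD1 h κ₁) (y : Fin m → ℝ) (β : Fin d) (j : Fin m) :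
    jac h y β j = fderiv ℝ (fun z => h z β) y (Pi.single j 1) := by
  have hdiff : DifferentiableAt ℝ h y :=
    (hD1.1.differentiable (by norm_num)).differentiableAt
  have hc := (ContinuousLinearMap.proj (R := ℝ) (φ := fun _ : Fin d => ℝ) β).hasFDerivAt.comp
      y hdiff.hasFDerivAt
  have hc' : HasFDerivAt (fun z => h z β)
      ((ContinuousLinearMap.proj β).comp (fderiv ℝ h y)) y := hc
  rw [hc'.fderiv]
  rfl

lemma opNorm2_hess_sum (hD1 : AssumptionD1 h κ₁) (x : Fin m → ℝ) (ζ : Fin d → ℝ) :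
    opNorm2 (∑ γ, ζ γ • hess h γ x) ≤ κ₁ x * enorm2 ζ := by
  set M := ∑ γ, ζ γ • hess h γ x with hM
  have stepA : ∀ Δ : Fin m → ℝ,
      enorm2 (Mᵀ.mulVec Δ) ≤ (κ₁ x * enorm2 ζ) * enorm2 Δ := by
    intro Δ
    -- the difference vector
    set ψ : ℝ → Fin m → ℝ :=
      fun t => fun j => ∑ β, ζ β * (jac h (x + t • Δ) β j - jac h x β j) with hψdef
    -- derivative of each coordinate
    have hcoord : ∀ j : Fin m,
        HasDerivAt (fun t => ψ t j)
          (∑ β, ζ β * (∑ i, Δ i * hess h β x i j)) 0 := by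
      intro j
      apply HasDerivAt.fun_sum
      intro β _
      apply HasDerivAt.const_mul
      apply HasDerivAt.sub_const
      -- t ↦ jac h (x + t • Δ) β j
      have hβ : ContDiff ℝ 3 (fun z => h z β) := contDiff_pi.mp hD1.1 β
      set g : (Fin m → ℝ) → ℝ :=
        fun y => fderiv ℝ (fun z => h z β) y (Pi.single j 1) with hg
      have hgC : ContDiff ℝ 2 g :=
        (hβ.fderiv_right (by norm_num)).clm_apply contDiff_const
      have hgd : Differentiable ℝ g := hgC.differentiable (by norm_num)
      have hline : HasDerivAt (fun t : ℝ => x + t • Δ) Δ 0 := by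
        simpa using ((hasDerivAt_id (0:ℝ)).smul_const Δ).const_add x
      have hcomp : HasDerivAt (fun t : ℝ => g (x + t • Δ))
          (fderiv ℝ g (x + (0:ℝ) • Δ) Δ) 0 :=
        HasFDerivAt.comp_hasDerivAt (f := fun t : ℝ => x + t • Δ) (x := (0:ℝ))
          (hgd (x + (0:ℝ) • Δ)).hasFDerivAt hline
      have h0 : x + (0:ℝ) • Δ = x := by simp
      rw [h0] at hcomp
      have heq : (fun t : ℝ => jac h (x + t • Δ) β j) = fun t => g (x + t • Δ) := by
        funext t
        exact jac_comp hD1 _ β j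
      rw [heq]
      have hval : fderiv ℝ g x Δ = ∑ i, Δ i * hess h β x i j := by
        conv_lhs => rw [pi_eq_sum_univ Δ]
        rw [map_sum]
        refine Finset.sum_congr rfl fun i _ => ?_
        have hsingle : (fun j' => if i = j' then (1:ℝ) else 0) = Pi.single i 1 := by
          funext j'
          simp [Pi.single_apply, eq_comm]
        rw [ContinuousLinearMap.map_smul, hsingle]
        simp [hess, hg, smul_eq_mul]
      rw [← hval]
      exact hcomp
    -- identify the limit with Mᵀ.mulVec Δ
    have hDeq : (fun j => ∑ β, ζ β * (∑ i, Δ i * hess h β x i j)) = Mᵀ.mulVec Δ := by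
      funext j
      simp only [Matrix.mulVec, dotProduct, Matrix.transpose_apply, hM,
        Matrix.sum_apply, Matrix.smul_apply, smul_eq_mul, Finset.sum_mul, Finset.mul_sum]
      rw [Finset.sum_comm]
      exact Finset.sum_congr rfl fun i _ => Finset.sum_congr rfl fun β _ => by ring
    -- limit of slopes
    have htend : Tendsto (fun t : ℝ => t⁻¹ • ψ t) (𝓝[≠] (0:ℝ)) (𝓝 (Mᵀ.mulVec Δ)) := by
      rw [← hDeq, tendsto_pi_nhds]
      intro j
      have hslope := hasDerivAt_iff_tendsto_slope.mp (hcoord j)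
      have hψ0 : ψ 0 j = 0 := by simp [hψdef]
      refine hslope.congr fun t => ?_
      simp [slope_def_field, hψ0, Pi.smul_apply, smul_eq_mul, div_eq_inv_mul]
    have htend' : Tendsto (fun t : ℝ => enorm2 (t⁻¹ • ψ t)) (𝓝[>] (0:ℝ))
        (𝓝 (enorm2 (Mᵀ.mulVec Δ))) := by
      refine (enorm2_continuous.tendsto _).comp (htend.mono_left ?_)
      exact nhdsWithin_mono _ fun t ht => ne_of_gt ht
    have hbound : ∀ t ∈ Set.Ioi (0:ℝ),
        enorm2 (t⁻¹ • ψ t) ≤ κ₁ x * enorm2 Δ * enorm2 ζ := by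
      intro t ht
      have ht' : (0:ℝ) < t := ht
      have h1 := hD1.2.2 x (t • Δ) ζ
      have h2 : enorm2 (ψ t) ≤ κ₁ x * (t * enorm2 Δ) * enorm2 ζ := by
        have : enorm2 (t • Δ) = t * enorm2 Δ := by
          rw [enorm2_smul, abs_of_pos ht']
        rw [← this]
        exact h1
      rw [enorm2_smul, abs_of_pos (inv_pos.mpr ht')]
      calc t⁻¹ * enorm2 (ψ t) ≤ t⁻¹ * (κ₁ x * (t * enorm2 Δ) * enorm2 ζ) := by
            exact mul_le_mul_of_nonneg_left h2 (le_of_lt (inv_pos.mpr ht'))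
        _ = κ₁ x * enorm2 Δ * enorm2 ζ := by
            field_simp
    have := le_of_tendsto htend' (Filter.eventually_of_mem self_mem_nhdsWithin hbound)
    calc enorm2 (Mᵀ.mulVec Δ) ≤ κ₁ x * enorm2 Δ * enorm2 ζ := this
      _ = (κ₁ x * enorm2 ζ) * enorm2 Δ := by ring
  have hT : opNorm2 Mᵀ ≤ κ₁ x * enorm2 ζ :=
    opNorm2_le _ (mul_nonneg (hD1.2.1 x) (enorm2_nonneg ζ)) stepA
  calc opNorm2 M = opNorm2 (Mᵀᵀ) := by rw [Matrix.transpose_transpose]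
    _ ≤ opNorm2 Mᵀ := opNorm2_transpose_le _
    _ ≤ κ₁ x * enorm2 ζ := hT

end Analysis
section Algebra

variable {m d : ℕ}

lemma mulVec_sumF {p q : ℕ} {ι : Type*} (A : Matrix (Fin p) (Fin q) ℝ) (s : Finset ι)
    (f : ι → Fin q → ℝ) : A.mulVec (∑ i ∈ s, f i) = ∑ i ∈ s, A.mulVec (f i) := by
  have := map_sum (A.mulVecLin) f s
  simpa only [Matrix.mulVecLin_apply] using this

lemma mulVec_smulF {p q : ℕ} (A : Matrix (Fin p) (Fin q) ℝ) (c : ℝ) (v : Fin q → ℝ) :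
    A.mulVec (c • v) = c • A.mulVec v := by
  have := A.mulVecLin.map_smul c v
  simpa only [Matrix.mulVecLin_apply] using this

lemma mulVec_lin1 {p q : ℕ} (A : Matrix (Fin p) (Fin q) ℝ) (w : Fin d → ℝ)
    (f : Fin d → Fin q → ℝ) :
    A.mulVec (∑ i, w i • f i) = ∑ i, w i • A.mulVec (f i) := by
  rw [mulVec_sumF]
  exact Finset.sum_congr rfl fun i _ => mulVec_smulF A (w i) (f i)

lemma mulVec_lin2 {p q : ℕ} (B : Fin d → Matrix (Fin p) (Fin q) ℝ) (w : Fin d → ℝ)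
    (v : Fin q → ℝ) :
    (∑ i, w i • B i).mulVec v = ∑ i, w i • (B i).mulVec v := by
  ext j
  simp only [Matrix.mulVec, dotProduct, Matrix.sum_apply, Matrix.smul_apply,
    Finset.sum_apply, Pi.smul_apply, smul_eq_mul, Finset.sum_mul, Finset.mul_sum]
  rw [Finset.sum_comm]
  exact Finset.sum_congr rfl fun _ _ => Finset.sum_congr rfl fun _ _ => mul_assoc _ _ _

lemma dot_sum_left {k : ℕ} {ι : Type*} (s : Finset ι) (f : ι → Fin k → ℝ) (w : Fin k → ℝ) :
    (∑ i ∈ s, f i) ⬝ᵥ w = ∑ i ∈ s, f i ⬝ᵥ w := by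
  simp only [dotProduct, Finset.sum_apply, Finset.sum_mul]
  exact Finset.sum_comm

lemma dot_sum_right {k : ℕ} {ι : Type*} (s : Finset ι) (w : Fin k → ℝ) (f : ι → Fin k → ℝ) :
    w ⬝ᵥ (∑ i ∈ s, f i) = ∑ i ∈ s, w ⬝ᵥ f i := by
  simp only [dotProduct, Finset.sum_apply, Finset.mul_sum]
  exact Finset.sum_comm

lemma triple_eq (S : Matrix (Fin m) (Fin m) ℝ) (h : (Fin m → ℝ) → Fin d → ℝ)
    (x : Fin m → ℝ) (a b c : Fin d → ℝ) :
    ∑ β, ∑ γ, ∑ ω, a β * b γ * c ω * KnE S h x β γ ω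
      = (∑ β, a β • jac h x β) ⬝ᵥ
          S.mulVec ((∑ γ, b γ • hess h γ x).mulVec
            (S.mulVec (∑ ω, c ω • jac h x ω))) := by
  rw [mulVec_lin1 S c (fun ω => jac h x ω), mulVec_lin2, dot_sum_left]
  refine Finset.sum_congr rfl fun β _ => ?_
  rw [smul_dotProduct]
  rw [show ∑ γ, b γ • (hess h γ x).mulVec (∑ ω, c ω • S.mulVec (jac h x ω))
      = ∑ γ, ∑ ω, (b γ * c ω) • (hess h γ x).mulVec (S.mulVec (jac h x ω)) from
    Finset.sum_congr rfl fun γ _ => by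
      rw [mulVec_lin1, Finset.smul_sum]
      exact Finset.sum_congr rfl fun ω _ => by rw [smul_smul]]
  rw [mulVec_sumF]
  rw [show ∑ γ, S.mulVec (∑ ω, (b γ * c ω) • (hess h γ x).mulVec (S.mulVec (jac h x ω)))
      = ∑ γ, ∑ ω, (b γ * c ω) • S.mulVec ((hess h γ x).mulVec (S.mulVec (jac h x ω))) from
    Finset.sum_congr rfl fun γ _ => by
      rw [mulVec_sumF]
      exact Finset.sum_congr rfl fun ω _ => mulVec_smulF _ _ _]
  rw [dot_sum_right, smul_eq_mul, Finset.mul_sum]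
  refine Finset.sum_congr rfl fun γ _ => ?_
  rw [dot_sum_right, Finset.mul_sum]
  refine Finset.sum_congr rfl fun ω _ => ?_
  rw [dotProduct_smul]
  simp only [smul_eq_mul, KnE]
  ring

end Algebra
section Bound

variable {m d : ℕ} {h : (Fin m → ℝ) → Fin d → ℝ} {κ₁ : (Fin m → ℝ) → ℝ}

lemma sum_smul_rows (J : Matrix (Fin d) (Fin m) ℝ) (a : Fin d → ℝ) :
    ∑ β, a β • J β = Jᵀ.mulVec a := by
  ext j
  simp [Matrix.mulVec, dotProduct, Matrix.transpose_apply, Finset.sum_apply,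
    mul_comm]

lemma contract_bound (hD1 : AssumptionD1 h κ₁) (S : Matrix (Fin m) (Fin m) ℝ)
    (x : Fin m → ℝ) (a b c : Fin d → ℝ) :
    |∑ β, ∑ γ, ∑ ω, a β * b γ * c ω * KnE S h x β γ ω|
      ≤ opNorm2 S ^ 2 * (κ₁ x * opNorm2 (jac h x) ^ 2)
          * (enorm2 a * enorm2 b * enorm2 c) := by
  set J := jac h x with hJ
  set M := ∑ γ, b γ • hess h γ x with hMdef
  rw [triple_eq, sum_smul_rows, sum_smul_rows, ← hMdef]
  have hSnn := opNorm2_nonneg S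
  have hJnn := opNorm2_nonneg J
  have hκnn := hD1.2.1 x
  have hann := enorm2_nonneg a
  have hbnn := enorm2_nonneg b
  have hcnn := enorm2_nonneg c
  have hua : enorm2 (Jᵀ.mulVec a) ≤ opNorm2 J * enorm2 a :=
    (enorm2_mulVec_le Jᵀ a).trans
      (mul_le_mul_of_nonneg_right (opNorm2_transpose_le J) hann)
  have huc : enorm2 (Jᵀ.mulVec c) ≤ opNorm2 J * enorm2 c :=
    (enorm2_mulVec_le Jᵀ c).trans
      (mul_le_mul_of_nonneg_right (opNorm2_transpose_le J) hcnn)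
  have hMop : opNorm2 M ≤ κ₁ x * enorm2 b := opNorm2_hess_sum hD1 x b
  have h1 : enorm2 (S.mulVec (Jᵀ.mulVec c)) ≤ opNorm2 S * (opNorm2 J * enorm2 c) :=
    (enorm2_mulVec_le S _).trans (mul_le_mul_of_nonneg_left huc hSnn)
  have h2 : enorm2 (M.mulVec (S.mulVec (Jᵀ.mulVec c)))
      ≤ (κ₁ x * enorm2 b) * (opNorm2 S * (opNorm2 J * enorm2 c)) :=
    (enorm2_mulVec_le M _).trans
      (mul_le_mul hMop h1 (enorm2_nonneg _) (by positivity))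
  have h3 : enorm2 (S.mulVec (M.mulVec (S.mulVec (Jᵀ.mulVec c))))
      ≤ opNorm2 S * ((κ₁ x * enorm2 b) * (opNorm2 S * (opNorm2 J * enorm2 c))) :=
    (enorm2_mulVec_le S _).trans (mul_le_mul_of_nonneg_left h2 hSnn)
  calc |Jᵀ.mulVec a ⬝ᵥ S.mulVec (M.mulVec (S.mulVec (Jᵀ.mulVec c)))|
      ≤ enorm2 (Jᵀ.mulVec a) * enorm2 (S.mulVec (M.mulVec (S.mulVec (Jᵀ.mulVec c)))) :=
        abs_dot_le _ _
    _ ≤ (opNorm2 J * enorm2 a)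
          * (opNorm2 S * ((κ₁ x * enorm2 b) * (opNorm2 S * (opNorm2 J * enorm2 c)))) :=
        mul_le_mul hua h3 (enorm2_nonneg _) (by positivity)
    _ = opNorm2 S ^ 2 * (κ₁ x * opNorm2 J ^ 2) * (enorm2 a * enorm2 b * enorm2 c) := by
        ring

end Bound
section Grad

variable {m d n : ℕ}

lemma gradLn_eq (S : Matrix (Fin m) (Fin m) ℝ) (h : (Fin m → ℝ) → Fin d → ℝ)
    (X : Fin n → Fin m → ℝ) (ζ : Fin d → ℝ) (β : Fin d) :
    gradLn S h X ζ β = (1/8) *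
      ((∑ γ, ∑ ω, ζ γ * ζ ω * Kn S h X β γ ω)
        + ((∑ γ, ∑ ω, ζ γ * ζ ω * Kn S h X γ β ω)
        + (∑ γ, ∑ ω, ζ γ * ζ ω * Kn S h X γ ω β))) := by
  classical
  have hproj : ∀ p : Fin d, HasFDerivAt (fun z : Fin d → ℝ => z p)
      (ContinuousLinearMap.proj (R := ℝ) (φ := fun _ : Fin d => ℝ) p) ζ :=
    fun p => (ContinuousLinearMap.proj (R := ℝ) (φ := fun _ : Fin d => ℝ) p).hasFDerivAt
  have hterm : ∀ p q r : Fin d,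
      HasFDerivAt (fun z : Fin d → ℝ => z p * z q * z r * Kn S h X p q r)
        (Kn S h X p q r •
          ((ζ p * ζ q) • ContinuousLinearMap.proj (R := ℝ) (φ := fun _ : Fin d => ℝ) r
            + ζ r • (ζ p • ContinuousLinearMap.proj (R := ℝ) (φ := fun _ : Fin d => ℝ) q
              + ζ q • ContinuousLinearMap.proj (R := ℝ) (φ := fun _ : Fin d => ℝ) p))) ζ :=
    fun p q r => (((hproj p).mul (hproj q)).mul (hproj r)).mul_const _
  have hsum : HasFDerivAt
      (fun z : Fin d → ℝ => ∑ p, ∑ q, ∑ r, z p * z q * z r * Kn S h X p q r)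
      (∑ p, ∑ q, ∑ r, Kn S h X p q r •
          ((ζ p * ζ q) • ContinuousLinearMap.proj (R := ℝ) (φ := fun _ : Fin d => ℝ) r
            + ζ r • (ζ p • ContinuousLinearMap.proj (R := ℝ) (φ := fun _ : Fin d => ℝ) q
              + ζ q • ContinuousLinearMap.proj (R := ℝ) (φ := fun _ : Fin d => ℝ) p))) ζ :=
    HasFDerivAt.fun_sum fun p _ => HasFDerivAt.fun_sum fun q _ => HasFDerivAt.fun_sum fun r _ =>
      hterm p q r
  have hLn : HasFDerivAt (Ln S h X)
      ((1/8 : ℝ) • ∑ p, ∑ q, ∑ r, Kn S h X p q r •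
          ((ζ p * ζ q) • ContinuousLinearMap.proj (R := ℝ) (φ := fun _ : Fin d => ℝ) r
            + ζ r • (ζ p • ContinuousLinearMap.proj (R := ℝ) (φ := fun _ : Fin d => ℝ) q
              + ζ q • ContinuousLinearMap.proj (R := ℝ) (φ := fun _ : Fin d => ℝ) p))) ζ := by
    have := hsum.const_mul (1/8 : ℝ)
    exact this
  rw [gradLn, hLn.fderiv]
  simp only [ContinuousLinearMap.smul_apply, ContinuousLinearMap.coe_sum',
    Finset.sum_apply, ContinuousLinearMap.add_apply, ContinuousLinearMap.proj_apply,
    Pi.single_apply, smul_eq_mul]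
  rw [Finset.mul_sum]
  trans (∑ p : Fin d, ∑ q : Fin d, ∑ r : Fin d,
      ((if r = β then 1/8 * (Kn S h X p q r * (ζ p * ζ q)) else 0)
        + ((if q = β then 1/8 * (Kn S h X p q r * (ζ r * ζ p)) else 0)
        + (if p = β then 1/8 * (Kn S h X p q r * (ζ r * ζ q)) else 0))))
  · refine Finset.sum_congr rfl fun p _ => ?_
    rw [Finset.mul_sum]
    refine Finset.sum_congr rfl fun q _ => ?_
    rw [Finset.mul_sum]
    refine Finset.sum_congr rfl fun r _ => ?_
    by_cases hp : p = β <;> by_cases hq : q = β <;> by_cases hr : r = β <;>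
      simp [hp, hq, hr] <;> ring
  · simp only [Finset.sum_add_distrib, Finset.sum_ite_irrel, Finset.sum_const_zero,
      Finset.sum_ite_eq', Finset.mem_univ, if_true]
    have e1 : ∑ x : Fin d, ∑ x1 : Fin d, 1/8 * (Kn S h X x x1 β * (ζ x * ζ x1))
        = 1/8 * ∑ γ, ∑ ω, ζ γ * ζ ω * Kn S h X γ ω β := by
      rw [Finset.mul_sum]
      refine Finset.sum_congr rfl fun γ _ => ?_
      rw [Finset.mul_sum]
      exact Finset.sum_congr rfl fun ω _ => by ring
    have e2 : ∑ x : Fin d, ∑ x1 : Fin d, 1/8 * (Kn S h X x β x1 * (ζ x1 * ζ x))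
        = 1/8 * ∑ γ, ∑ ω, ζ γ * ζ ω * Kn S h X γ β ω := by
      rw [Finset.mul_sum]
      refine Finset.sum_congr rfl fun γ _ => ?_
      rw [Finset.mul_sum]
      exact Finset.sum_congr rfl fun ω _ => by ring
    have e3 : ∑ x : Fin d, ∑ x1 : Fin d, 1/8 * (Kn S h X β x x1 * (ζ x1 * ζ x))
        = 1/8 * ∑ γ, ∑ ω, ζ γ * ζ ω * Kn S h X β γ ω := by
      rw [Finset.mul_sum]
      refine Finset.sum_congr rfl fun γ _ => ?_
      rw [Finset.mul_sum]
      exact Finset.sum_congr rfl fun ω _ => by ring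
    rw [e1, e2, e3]
    ring

end Grad
section KnBound

variable {m d n : ℕ} {h : (Fin m → ℝ) → Fin d → ℝ} {κ₁ : (Fin m → ℝ) → ℝ}

lemma Kn_swap (S : Matrix (Fin m) (Fin m) ℝ) (X : Fin n → Fin m → ℝ) (a b c : Fin d → ℝ) :
    ∑ β, ∑ γ, ∑ ω, a β * b γ * c ω * Kn S h X β γ ω
      = (n : ℝ)⁻¹ * ∑ i, ∑ β, ∑ γ, ∑ ω, a β * b γ * c ω * KnE S h (X i) β γ ω := by
  calc ∑ β, ∑ γ, ∑ ω, a β * b γ * c ω * Kn S h X β γ ω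
      = ∑ β, ∑ γ, ∑ ω, ∑ i, (n : ℝ)⁻¹ * (a β * b γ * c ω * KnE S h (X i) β γ ω) := by
        refine Finset.sum_congr rfl fun β _ => Finset.sum_congr rfl fun γ _ =>
          Finset.sum_congr rfl fun ω _ => ?_
        rw [Kn, Finset.mul_sum, Finset.mul_sum]
        exact Finset.sum_congr rfl fun i _ => by ring
    _ = ∑ β, ∑ γ, ∑ i, ∑ ω, (n : ℝ)⁻¹ * (a β * b γ * c ω * KnE S h (X i) β γ ω) := by
        exact Finset.sum_congr rfl fun β _ => Finset.sum_congr rfl fun γ _ =>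
          Finset.sum_comm
    _ = ∑ β, ∑ i, ∑ γ, ∑ ω, (n : ℝ)⁻¹ * (a β * b γ * c ω * KnE S h (X i) β γ ω) := by
        exact Finset.sum_congr rfl fun β _ => Finset.sum_comm
    _ = ∑ i, ∑ β, ∑ γ, ∑ ω, (n : ℝ)⁻¹ * (a β * b γ * c ω * KnE S h (X i) β γ ω) :=
        Finset.sum_comm
    _ = (n : ℝ)⁻¹ * ∑ i, ∑ β, ∑ γ, ∑ ω, a β * b γ * c ω * KnE S h (X i) β γ ω := by
        rw [Finset.mul_sum]
        refine Finset.sum_congr rfl fun i _ => ?_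
        rw [Finset.mul_sum]
        refine Finset.sum_congr rfl fun β _ => ?_
        rw [Finset.mul_sum]
        refine Finset.sum_congr rfl fun γ _ => ?_
        rw [Finset.mul_sum]

lemma Kn_contract_bound (hD1 : AssumptionD1 h κ₁) (S : Matrix (Fin m) (Fin m) ℝ)
    (X : Fin n → Fin m → ℝ) (a b c : Fin d → ℝ) :
    |∑ β, ∑ γ, ∑ ω, a β * b γ * c ω * Kn S h X β γ ω|
      ≤ opNorm2 S ^ 2 * (enorm2 a * enorm2 b * enorm2 c)
          * ((n : ℝ)⁻¹ * ∑ i, opNorm2 (jac h (X i)) ^ 2 * κ₁ (X i)) := by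
  rw [Kn_swap]
  have hinv : (0:ℝ) ≤ (n : ℝ)⁻¹ := by positivity
  calc |(n : ℝ)⁻¹ * ∑ i, ∑ β, ∑ γ, ∑ ω, a β * b γ * c ω * KnE S h (X i) β γ ω|
      = (n : ℝ)⁻¹ * |∑ i, ∑ β, ∑ γ, ∑ ω, a β * b γ * c ω * KnE S h (X i) β γ ω| := by
        rw [abs_mul, abs_of_nonneg hinv]
    _ ≤ (n : ℝ)⁻¹ * ∑ i, |∑ β, ∑ γ, ∑ ω, a β * b γ * c ω * KnE S h (X i) β γ ω| :=
        mul_le_mul_of_nonneg_left (Finset.abs_sum_le_sum_abs _ _) hinv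
    _ ≤ (n : ℝ)⁻¹ * ∑ i, opNorm2 S ^ 2 * (κ₁ (X i) * opNorm2 (jac h (X i)) ^ 2)
          * (enorm2 a * enorm2 b * enorm2 c) :=
        mul_le_mul_of_nonneg_left
          (Finset.sum_le_sum fun i _ => contract_bound hD1 S (X i) a b c) hinv
    _ = opNorm2 S ^ 2 * (enorm2 a * enorm2 b * enorm2 c)
          * ((n : ℝ)⁻¹ * ∑ i, opNorm2 (jac h (X i)) ^ 2 * κ₁ (X i)) := by
        rw [Finset.mul_sum, Finset.mul_sum, Finset.mul_sum]
        exact Finset.sum_congr rfl fun i _ => by ring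

end KnBound

/-- Bounds on the cubic form `L_n` and its gradient:
`|L_n(ζ)| ≤ (‖Σ‖₂²‖ζ‖₂³/8)(1 + E[‖Dh(X)‖₂²κ₁(X)])` and
`‖∇L_n(ζ)‖₂ ≤ (3‖Σ‖₂²‖ζ‖₂²/8)(1 + E[‖Dh(X)‖₂²κ₁(X)])`. -/
theorem Ln_bounds
    (m d : ℕ) (hm : 1 ≤ m) (hd : 1 ≤ d)
    (S : Matrix (Fin m) (Fin m) ℝ) (hSsymm : S.IsSymm) (hSpd : S.PosDef)
    (h : (Fin m → ℝ) → Fin d → ℝ) (κ₁ : (Fin m → ℝ) → ℝ) (hD1 : AssumptionD1 h κ₁)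
    (P : Measure (Fin m → ℝ)) (hP : IsProbabilityMeasure P)
    (n : ℕ) (hn : 1 ≤ n) (X : Fin n → Fin m → ℝ)
    (hA4 : (n : ℝ)⁻¹ * ∑ i, opNorm2 (jac h (X i)) ^ 2 * κ₁ (X i) ≤ 1 + momA h κ₁ P) :
    ∀ ζ : Fin d → ℝ,
      |Ln S h X ζ| ≤ opNorm2 S ^ 2 * enorm2 ζ ^ 3 / 8 * (1 + momA h κ₁ P) ∧
      enorm2 (gradLn S h X ζ) ≤ 3 * opNorm2 S ^ 2 * enorm2 ζ ^ 2 / 8 * (1 + momA h κ₁ P) := by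
  intro ζ
  set C := 1 + momA h κ₁ P with hCdef
  have hsum_nonneg : 0 ≤ (n : ℝ)⁻¹ * ∑ i, opNorm2 (jac h (X i)) ^ 2 * κ₁ (X i) := by
    apply mul_nonneg (by positivity)
    exact Finset.sum_nonneg fun i _ => mul_nonneg (by positivity) (hD1.2.1 _)
  have hC : 0 ≤ C := le_trans hsum_nonneg hA4
  have key : ∀ a b c : Fin d → ℝ,
      |∑ β, ∑ γ, ∑ ω, a β * b γ * c ω * Kn S h X β γ ω|
        ≤ opNorm2 S ^ 2 * (enorm2 a * enorm2 b * enorm2 c) * C := by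
    intro a b c
    refine (Kn_contract_bound hD1 S X a b c).trans ?_
    apply mul_le_mul_of_nonneg_left hA4
    have := opNorm2_nonneg S
    have := enorm2_nonneg a
    have := enorm2_nonneg b
    have := enorm2_nonneg c
    positivity
  constructor
  · -- |Ln ζ| bound
    have h1 : |Ln S h X ζ| = 1/8 *
        |∑ β, ∑ γ, ∑ ω, ζ β * ζ γ * ζ ω * Kn S h X β γ ω| := by
      rw [Ln, abs_mul]
      norm_num
    rw [h1]
    calc 1/8 * |∑ β, ∑ γ, ∑ ω, ζ β * ζ γ * ζ ω * Kn S h X β γ ω|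
        ≤ 1/8 * (opNorm2 S ^ 2 * (enorm2 ζ * enorm2 ζ * enorm2 ζ) * C) := by
          apply mul_le_mul_of_nonneg_left (key ζ ζ ζ)
          norm_num
      _ = opNorm2 S ^ 2 * enorm2 ζ ^ 3 / 8 * C := by ring
  · -- gradient bound
    set v1 : Fin d → ℝ := fun β => ∑ γ, ∑ ω, ζ γ * ζ ω * Kn S h X β γ ω with hv1def
    set v2 : Fin d → ℝ := fun β => ∑ γ, ∑ ω, ζ γ * ζ ω * Kn S h X γ β ω with hv2def
    set v3 : Fin d → ℝ := fun β => ∑ γ, ∑ ω, ζ γ * ζ ω * Kn S h X γ ω β with hv3def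
    have hg : gradLn S h X ζ = (1/8 : ℝ) • (v1 + (v2 + v3)) := by
      funext β
      rw [gradLn_eq]
      simp [hv1def, hv2def, hv3def, Pi.smul_apply, Pi.add_apply, smul_eq_mul]
    set K := opNorm2 S ^ 2 * enorm2 ζ ^ 2 * C with hKdef
    have hKnn : 0 ≤ K := by
      have := opNorm2_nonneg S
      have := enorm2_nonneg ζ
      positivity
    -- a generic bound extractor
    have extract : ∀ v : Fin d → ℝ, enorm2 v ^ 2 ≤ K * enorm2 v → enorm2 v ≤ K := by
      intro v hsq
      rcases eq_or_lt_of_le (enorm2_nonneg v) with h0 | h0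
      · rw [← h0]; exact hKnn
      · rw [sq] at hsq
        exact le_of_mul_le_mul_right hsq h0
    have hb1 : enorm2 v1 ≤ K := by
      apply extract
      have hdot : v1 ⬝ᵥ v1 = ∑ p, ∑ q, ∑ r, v1 p * ζ q * ζ r * Kn S h X p q r := by
        refine Finset.sum_congr rfl fun p _ => ?_
        rw [show v1 p * v1 p = v1 p * ∑ q, ∑ r, ζ q * ζ r * Kn S h X p q r from rfl]
        rw [Finset.mul_sum]
        refine Finset.sum_congr rfl fun q _ => ?_
        rw [Finset.mul_sum]
        exact Finset.sum_congr rfl fun r _ => by ring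
      rw [enorm2_sq, hdot]
      calc ∑ p, ∑ q, ∑ r, v1 p * ζ q * ζ r * Kn S h X p q r
          ≤ |∑ p, ∑ q, ∑ r, v1 p * ζ q * ζ r * Kn S h X p q r| := le_abs_self _
        _ ≤ opNorm2 S ^ 2 * (enorm2 v1 * enorm2 ζ * enorm2 ζ) * C := key v1 ζ ζ
        _ = K * enorm2 v1 := by rw [hKdef]; ring
    have hb2 : enorm2 v2 ≤ K := by
      apply extract
      have hdot : v2 ⬝ᵥ v2 = ∑ p, ∑ q, ∑ r, ζ p * v2 q * ζ r * Kn S h X p q r := by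
        rw [show (∑ p, ∑ q, ∑ r, ζ p * v2 q * ζ r * Kn S h X p q r)
            = ∑ q, ∑ p, ∑ r, ζ p * v2 q * ζ r * Kn S h X p q r from Finset.sum_comm]
        refine Finset.sum_congr rfl fun q _ => ?_
        rw [show v2 q * v2 q = v2 q * ∑ p, ∑ r, ζ p * ζ r * Kn S h X p q r from rfl]
        rw [Finset.mul_sum]
        refine Finset.sum_congr rfl fun p _ => ?_
        rw [Finset.mul_sum]
        exact Finset.sum_congr rfl fun r _ => by ring
      rw [enorm2_sq, hdot]
      calc ∑ p, ∑ q, ∑ r, ζ p * v2 q * ζ r * Kn S h X p q r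
          ≤ |∑ p, ∑ q, ∑ r, ζ p * v2 q * ζ r * Kn S h X p q r| := le_abs_self _
        _ ≤ opNorm2 S ^ 2 * (enorm2 ζ * enorm2 v2 * enorm2 ζ) * C := key ζ v2 ζ
        _ = K * enorm2 v2 := by rw [hKdef]; ring
    have hb3 : enorm2 v3 ≤ K := by
      apply extract
      have hdot : v3 ⬝ᵥ v3 = ∑ p, ∑ q, ∑ r, ζ p * ζ q * v3 r * Kn S h X p q r := by
        rw [show (∑ p, ∑ q, ∑ r, ζ p * ζ q * v3 r * Kn S h X p q r)
            = ∑ p, ∑ r, ∑ q, ζ p * ζ q * v3 r * Kn S h X p q r from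
          Finset.sum_congr rfl fun p _ => Finset.sum_comm]
        rw [show (∑ p, ∑ r, ∑ q, ζ p * ζ q * v3 r * Kn S h X p q r)
            = ∑ r, ∑ p, ∑ q, ζ p * ζ q * v3 r * Kn S h X p q r from Finset.sum_comm]
        refine Finset.sum_congr rfl fun r _ => ?_
        rw [show v3 r * v3 r = v3 r * ∑ p, ∑ q, ζ p * ζ q * Kn S h X p q r from rfl]
        rw [Finset.mul_sum]
        refine Finset.sum_congr rfl fun p _ => ?_
        rw [Finset.mul_sum]
        exact Finset.sum_congr rfl fun q _ => by ring
      rw [enorm2_sq, hdot]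
      calc ∑ p, ∑ q, ∑ r, ζ p * ζ q * v3 r * Kn S h X p q r
          ≤ |∑ p, ∑ q, ∑ r, ζ p * ζ q * v3 r * Kn S h X p q r| := le_abs_self _
        _ ≤ opNorm2 S ^ 2 * (enorm2 ζ * enorm2 ζ * enorm2 v3) * C := key ζ ζ v3
        _ = K * enorm2 v3 := by rw [hKdef]; ring
    rw [hg]
    calc enorm2 ((1/8 : ℝ) • (v1 + (v2 + v3)))
        = 1/8 * enorm2 (v1 + (v2 + v3)) := by
          rw [enorm2_smul]
          norm_num
      _ ≤ 1/8 * (enorm2 v1 + (enorm2 v2 + enorm2 v3)) := by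
          apply mul_le_mul_of_nonneg_left _ (by norm_num)
          exact (enorm2_add_le _ _).trans
            (add_le_add (le_refl _) (enorm2_add_le _ _))
      _ ≤ 1/8 * (K + (K + K)) := by
          apply mul_le_mul_of_nonneg_left _ (by norm_num)
          exact add_le_add hb1 (add_le_add hb2 hb3)
      _ = 3 * opNorm2 S ^ 2 * enorm2 ζ ^ 2 / 8 * C := by rw [hKdef]; ring

end
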